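/- Let (X, Y, ⟨·,·⟩) be a dual pairing, T ⊆ X × Y, n ≥ 1, and K_T defined by ((x,y),(u,v)) ∈ K_T iff (x,v),(u,y) ∈ T. Then the n-th Fitzpatrick function of K_T (with respect to the self-pairing on Z = X×Y) splits as φ⁽ⁿ⁾_{K_T}((x,y),(u,v)) = φ⁽ⁿ⁾_T(x,v) + φ⁽ⁿ⁾_T(u,y) for all x,u ∈ X, y,v ∈ Y. -/

import Mathlib

variable {X Y : Type*} [AddCommGroup X] [Module ℝ X] [AddCommGroup Y] [Module ℝ Y]

/-- The natural symmetric pairing on `Z = X × Y`: `z·w = ⟨x,v⟩ + ⟨u,y⟩`. -/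
def zPair (b : X →ₗ[ℝ] Y →ₗ[ℝ] ℝ) (z w : X × Y) : ℝ :=
  b z.1 w.2 + b w.1 z.2

/-- The operator `K_T : Z ⇒ Z`: `((x,y),(u,v)) ∈ K_T` iff `(x,v), (u,y) ∈ T`. -/
def KGraph (T : Set (X × Y)) : Set ((X × Y) × (X × Y)) :=
  {p | (p.1.1, p.2.2) ∈ T ∧ (p.2.1, p.1.2) ∈ T}

/-- The `n`-th Fitzpatrick function of `T ⊆ X × Y`. -/
noncomputable def fitz (b : X →ₗ[ℝ] Y →ₗ[ℝ] ℝ) (T : Set (X × Y)) (n : ℕ)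
    (x : X) (y : Y) : EReal :=
  sSup {r : EReal | ∃ c : ℕ → X × Y, (∀ i ∈ Finset.Icc 1 n, c i ∈ T) ∧
    r = ((b (x - (c 1).1) (c 1).2
        + ∑ i ∈ Finset.Icc 2 n, b ((c (i - 1)).1 - (c i).1) (c i).2
        + b (c n).1 y : ℝ) : EReal)}

/-- The `n`-th Fitzpatrick function of `K_T` with respect to the self-pairing on `Z`. -/
noncomputable def fitzK (b : X →ₗ[ℝ] Y →ₗ[ℝ] ℝ) (T : Set (X × Y)) (n : ℕ)
    (z w : X × Y) : EReal :=
  sSup {r : EReal | ∃ c : ℕ → (X × Y) × (X × Y),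
    (∀ i ∈ Finset.Icc 1 n, c i ∈ KGraph T) ∧
    r = ((zPair b (z - (c 1).1) (c 1).2
        + ∑ i ∈ Finset.Icc 2 n, zPair b ((c (i - 1)).1 - (c i).1) (c i).2
        + zPair b (c n).1 w : ℝ) : EReal)}

section Aux

variable (b : X →ₗ[ℝ] Y →ₗ[ℝ] ℝ) (T : Set (X × Y)) (n : ℕ)

/-- The real value of a chain. -/
def fval (x : X) (y : Y) (c : ℕ → X × Y) : ℝ :=
  b (x - (c 1).1) (c 1).2
    + ∑ i ∈ Finset.Icc 2 n, b ((c (i - 1)).1 - (c i).1) (c i).2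
    + b (c n).1 y

lemma fval_congr {x : X} {y : Y} {c c' : ℕ → X × Y}
    (hn : 1 ≤ n) (h : ∀ i ∈ Finset.Icc 1 n, c i = c' i) :
    fval b n x y c = fval b n x y c' := by
  unfold fval
  rw [h 1 (by simp [hn]), h n (by simp [hn])]
  congr 1
  congr 1
  refine Finset.sum_congr rfl fun i hi => ?_
  simp only [Finset.mem_Icc] at hi
  rw [h (i - 1) (by simp only [Finset.mem_Icc]; omega),
    h i (by simp only [Finset.mem_Icc]; omega)]

lemma fitz_eq (x : X) (y : Y) : fitz b T n x y =
    sSup ((fun r : ℝ => (r : EReal)) ''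
      {r : ℝ | ∃ c : ℕ → X × Y, (∀ i ∈ Finset.Icc 1 n, c i ∈ T) ∧ r = fval b n x y c}) := by
  unfold fitz fval
  congr 1
  ext r
  constructor
  · rintro ⟨c, hc, rfl⟩; exact ⟨_, ⟨c, hc, rfl⟩, rfl⟩
  · rintro ⟨s, ⟨c, hc, rfl⟩, rfl⟩; exact ⟨c, hc, rfl⟩

/-- Reversing a chain gives the "transposed" telescoping value. -/
lemma rev_val (hn : 1 ≤ n) (e : ℕ → X) (d : ℕ → Y) (u : X) (y : Y) :
    fval b n u y (fun i => (e (n + 1 - i), d (n + 1 - i)))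
      = b (e 1) (y - d 1) + ∑ i ∈ Finset.Icc 2 n, b (e i) (d (i - 1) - d i)
        + b u (d n) := by
  have h1 : n + 1 - 1 = n := by omega
  have h2 : n + 1 - n = 1 := by omega
  have key1 : ∑ i ∈ Finset.Icc 2 n, b (e (n + 1 - (i - 1))) (d (n + 1 - i))
      = ∑ i ∈ Finset.Icc 2 n, b (e i) (d (i - 1)) := by
    refine Finset.sum_nbij' (fun i => n + 2 - i) (fun i => n + 2 - i) ?_ ?_ ?_ ?_ ?_
    · intro a ha; simp only [Finset.mem_Icc] at ha ⊢; omega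
    · intro a ha; simp only [Finset.mem_Icc] at ha ⊢; omega
    · intro a ha; simp only [Finset.mem_Icc] at ha
      show n + 2 - (n + 2 - a) = a; omega
    · intro a ha; simp only [Finset.mem_Icc] at ha
      show n + 2 - (n + 2 - a) = a; omega
    · intro a ha; simp only [Finset.mem_Icc] at ha
      show b (e (n + 1 - (a - 1))) (d (n + 1 - a)) = b (e (n + 2 - a)) (d (n + 2 - a - 1))
      rw [show n + 1 - (a - 1) = n + 2 - a by omega, show n + 1 - a = n + 2 - a - 1 by omega]
  have key2 : ∑ i ∈ Finset.Icc 2 n, b (e (n + 1 - i)) (d (n + 1 - i))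
      = ∑ i ∈ Finset.Icc 1 (n - 1), b (e i) (d i) := by
    refine Finset.sum_nbij' (fun i => n + 1 - i) (fun i => n + 1 - i) ?_ ?_ ?_ ?_ ?_
    · intro a ha; simp only [Finset.mem_Icc] at ha ⊢; omega
    · intro a ha; simp only [Finset.mem_Icc] at ha ⊢; omega
    · intro a ha; simp only [Finset.mem_Icc] at ha
      show n + 1 - (n + 1 - a) = a; omega
    · intro a ha; simp only [Finset.mem_Icc] at ha
      show n + 1 - (n + 1 - a) = a; omega
    · intro a ha; rfl
  have key3 : ∑ i ∈ Finset.Icc 1 n, b (e i) (d i)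
      = b (e 1) (d 1) + ∑ i ∈ Finset.Icc 2 n, b (e i) (d i) := by
    rw [Finset.Icc_eq_cons_Ioc hn, Finset.sum_cons, ← Finset.Icc_add_one_left_eq_Ioc]; rfl
  have key4 : ∑ i ∈ Finset.Icc 1 n, b (e i) (d i)
      = ∑ i ∈ Finset.Icc 1 (n - 1), b (e i) (d i) + b (e n) (d n) := by
    conv_lhs => rw [show n = n - 1 + 1 by omega]
    rw [Finset.sum_Icc_succ_top (by omega)]
    rw [show n - 1 + 1 = n by omega]
  unfold fval
  simp only [h1, h2, map_sub, LinearMap.sub_apply, Finset.sum_sub_distrib]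
  rw [key1, key2]
  linarith [key3, key4]

lemma split_val (hn : 1 ≤ n) (x u : X) (y v : Y) (c : ℕ → (X × Y) × (X × Y)) :
    zPair b ((x, y) - (c 1).1) (c 1).2
        + ∑ i ∈ Finset.Icc 2 n, zPair b ((c (i - 1)).1 - (c i).1) (c i).2
        + zPair b (c n).1 (u, v)
      = fval b n x v (fun i => ((c i).1.1, (c i).2.2))
        + fval b n u y (fun i => ((c (n + 1 - i)).2.1, (c (n + 1 - i)).1.2)) := by
  rw [rev_val b n hn (fun j => (c j).2.1) (fun j => (c j).1.2) u y]
  unfold fval zPair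
  simp only [Prod.fst_sub, Prod.snd_sub, Finset.sum_add_distrib]
  ring

lemma sSup_coe_add {A B : Set ℝ} (hA : A.Nonempty) (hB : B.Nonempty) :
    sSup {r : EReal | ∃ a ∈ A, ∃ s ∈ B, r = ((a + s : ℝ) : EReal)}
      = sSup ((fun r : ℝ => (r : EReal)) '' A) + sSup ((fun r : ℝ => (r : EReal)) '' B) := by
  apply le_antisymm
  · apply sSup_le
    rintro r ⟨a, ha, s, hs, rfl⟩
    rw [EReal.coe_add]
    exact add_le_add (le_sSup ⟨a, ha, rfl⟩) (le_sSup ⟨s, hs, rfl⟩)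
  · apply EReal.add_le_of_forall_lt
    intro a' ha' b' hb'
    obtain ⟨_, ⟨a, ha, rfl⟩, hlt⟩ := lt_sSup_iff.mp ha'
    obtain ⟨_, ⟨s, hs, rfl⟩, hlt'⟩ := lt_sSup_iff.mp hb'
    calc a' + b' ≤ (a : EReal) + (s : EReal) := add_le_add hlt.le hlt'.le
    _ ≤ _ := by rw [← EReal.coe_add]; exact le_sSup ⟨a, ha, s, hs, rfl⟩

end Aux

/-- `φ⁽ⁿ⁾_{K_T}((x,y),(u,v)) = φ⁽ⁿ⁾_T(x,v) + φ⁽ⁿ⁾_T(u,y)`. -/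
theorem fitzK_eq_add (b : X →ₗ[ℝ] Y →ₗ[ℝ] ℝ) (T : Set (X × Y)) (n : ℕ)
    (hn : 1 ≤ n) (x u : X) (y v : Y) :
    fitzK b T n (x, y) (u, v) = fitz b T n x v + fitz b T n u y := by
  set A : Set ℝ :=
    {r : ℝ | ∃ c : ℕ → X × Y, (∀ i ∈ Finset.Icc 1 n, c i ∈ T) ∧ r = fval b n x v c} with hAdef
  set B : Set ℝ :=
    {r : ℝ | ∃ c : ℕ → X × Y, (∀ i ∈ Finset.Icc 1 n, c i ∈ T) ∧ r = fval b n u y c} with hBdef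
  have hset : {r : EReal | ∃ c : ℕ → (X × Y) × (X × Y),
      (∀ i ∈ Finset.Icc 1 n, c i ∈ KGraph T) ∧
      r = ((zPair b ((x, y) - (c 1).1) (c 1).2
          + ∑ i ∈ Finset.Icc 2 n, zPair b ((c (i - 1)).1 - (c i).1) (c i).2
          + zPair b (c n).1 (u, v) : ℝ) : EReal)}
      = {r : EReal | ∃ a ∈ A, ∃ s ∈ B, r = ((a + s : ℝ) : EReal)} := by
    ext r
    constructor
    · rintro ⟨c, hc, rfl⟩
      refine ⟨fval b n x v (fun i => ((c i).1.1, (c i).2.2)),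
        ⟨_, fun i hi => (hc i hi).1, rfl⟩,
        fval b n u y (fun i => ((c (n + 1 - i)).2.1, (c (n + 1 - i)).1.2)),
        ⟨_, fun i hi => ?_, rfl⟩, ?_⟩
      · simp only [Finset.mem_Icc] at hi
        exact (hc (n + 1 - i) (by simp only [Finset.mem_Icc]; omega)).2
      · rw [split_val b n hn x u y v c]
    · rintro ⟨a, ⟨p, hp, rfl⟩, s, ⟨q, hq, rfl⟩, rfl⟩
      refine ⟨fun i => (((p i).1, (q (n + 1 - i)).2), ((q (n + 1 - i)).1, (p i).2)), fun i hi => ?_, ?_⟩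
      · simp only [Finset.mem_Icc] at hi
        refine ⟨hp i (by simp only [Finset.mem_Icc]; omega), ?_⟩
        have := hq (n + 1 - i) (by simp only [Finset.mem_Icc]; omega)
        simpa using this
      · congr 1
        refine Eq.trans ?_ (split_val b n hn x u y v
          (fun i => (((p i).1, (q (n + 1 - i)).2), ((q (n + 1 - i)).1, (p i).2)))).symm
        congr 1
        refine fval_congr b n hn fun i hi => ?_
        simp only [Finset.mem_Icc] at hi
        show q i = ((q (n + 1 - (n + 1 - i))).1, (q (n + 1 - (n + 1 - i))).2)
        rw [show n + 1 - (n + 1 - i) = i by omega]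
  rcases T.eq_empty_or_nonempty with hT | ⟨t0, ht0⟩
  · subst hT
    have e1 : fitzK b (∅ : Set (X × Y)) n (x, y) (u, v) = ⊥ := by
      unfold fitzK
      refine (congrArg sSup ?_).trans sSup_empty
      ext r
      simp only [Set.mem_empty_iff_false, iff_false, Set.mem_setOf_eq, not_exists]
      rintro c ⟨hc, -⟩
      exact (hc 1 (by simp [hn])).1
    have e2 : fitz b (∅ : Set (X × Y)) n x v = ⊥ := by
      unfold fitz
      refine (congrArg sSup ?_).trans sSup_empty
      ext r
      simp only [Set.mem_empty_iff_false, iff_false, Set.mem_setOf_eq, not_exists]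
      rintro c ⟨hc, -⟩
      exact hc 1 (by simp [hn])
    have e3 : fitz b (∅ : Set (X × Y)) n u y = ⊥ := by
      unfold fitz
      refine (congrArg sSup ?_).trans sSup_empty
      ext r
      simp only [Set.mem_empty_iff_false, iff_false, Set.mem_setOf_eq, not_exists]
      rintro c ⟨hc, -⟩
      exact hc 1 (by simp [hn])
    rw [e1, e2, e3]
    simp
  · have hA : A.Nonempty := ⟨_, fun _ => t0, fun i _ => ht0, rfl⟩
    have hB : B.Nonempty := ⟨_, fun _ => t0, fun i _ => ht0, rfl⟩
    rw [fitz_eq b T n x v, fitz_eq b T n u y, ← sSup_coe_add hA hB]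
    unfold fitzK
    rw [hset]
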